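/- Let J be a d×d Jordan block with real eigenvalue λ ≠ 0, and let x ∈ ℝ^d have at least one nonzero component. Then the normalized vector J^n x / ‖J^n x‖ converges, up to sign, to the first standard basis vector: min(‖J^n x/‖J^n x‖ − e₁‖, ‖J^n x/‖J^n x‖ + e₁‖) → 0 as n → ∞. -/

import Mathlib

open Filter Finset Matrix

/-- The `d × d` Jordan block with eigenvalue `lam`. -/
def jordanBlock (d : ℕ) (lam : ℝ) : Matrix (Fin d) (Fin d) ℝ :=
  Matrix.of fun i j => if (j : ℕ) = (i : ℕ) then lam
    else if (j : ℕ) = (i : ℕ) + 1 then 1 else 0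


lemma nilp_apply (d : ℕ) (b j : Fin d) :
    jordanBlock d 0 b j = if (j:ℕ) = (b:ℕ)+1 then 1 else 0 := by
  simp only [jordanBlock, Matrix.of_apply]
  split_ifs <;> first | rfl | omega

lemma nilp_pow_apply (d m : ℕ) (i j : Fin d) :
    ((jordanBlock d 0) ^ m) i j = if (j:ℕ) = (i:ℕ) + m then 1 else 0 := by
  induction m generalizing j with
  | zero => simp [Matrix.one_apply, Fin.ext_iff, eq_comm]
  | succ m ih =>
    rw [pow_succ, Matrix.mul_apply]
    simp only [ih, nilp_apply]
    have hj := j.isLt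
    rcases Nat.lt_or_ge ((i:ℕ)+m) d with h | h
    · rw [Finset.sum_eq_single (⟨(i:ℕ)+m, h⟩ : Fin d)]
      · rw [if_pos rfl, one_mul]
        norm_num [Nat.add_assoc]
      · intro b _ hb
        rw [if_neg (fun hb' => hb (Fin.ext hb')), zero_mul]
      · simp
    · rw [Finset.sum_eq_zero, eq_comm, if_neg (by omega)]
      intro b _
      rw [if_neg (by omega), zero_mul]

lemma jordan_eq (d : ℕ) (lam : ℝ) :
    jordanBlock d lam = jordanBlock d 0 + lam • (1 : Matrix (Fin d) (Fin d) ℝ) := by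
  ext i j
  simp only [jordanBlock, Matrix.of_apply, Matrix.add_apply, Matrix.smul_apply,
    Matrix.one_apply, smul_eq_mul]
  by_cases h1 : (j:ℕ) = (i:ℕ)
  · rw [if_pos h1, if_pos h1, if_pos (Fin.ext h1.symm)]; ring
  · rw [if_neg h1, if_neg h1, if_neg (show ¬ i = j from fun hij => h1 (by rw [hij]))]
    split_ifs <;> ring

lemma jordan_pow (d : ℕ) (lam : ℝ) (n : ℕ) :
    (jordanBlock d lam)^n
      = ∑ m ∈ range (n+1), ((n.choose m : ℝ) * lam^(n-m)) • (jordanBlock d 0)^m := by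
  rw [jordan_eq]
  have hc : Commute (jordanBlock d 0) (lam • (1 : Matrix (Fin d) (Fin d) ℝ)) :=
    (Commute.one_right _).smul_right lam
  rw [hc.add_pow]
  refine Finset.sum_congr rfl fun m hm => ?_
  have h1 : (jordanBlock d 0)^m * ((n.choose m : ℕ) : Matrix (Fin d) (Fin d) ℝ)
      = (n.choose m : ℝ) • (jordanBlock d 0)^m := by
    rw [← (Nat.cast_commute (n.choose m) ((jordanBlock d 0)^m)).eq, ← nsmul_eq_mul,
      ← Nat.cast_smul_eq_nsmul ℝ]
  rw [smul_pow, one_pow, Matrix.mul_smul, Matrix.mul_one, Matrix.smul_mul, h1,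
    smul_smul, mul_comm]

lemma nilp_mulVec (d m : ℕ) (v : Fin d → ℝ) (i : Fin d) :
    (((jordanBlock d 0)^m) *ᵥ v) i = if h : (i:ℕ)+m < d then v ⟨(i:ℕ)+m, h⟩ else 0 := by
  rw [Matrix.mulVec, dotProduct]
  simp only [nilp_pow_apply]
  split_ifs with h
  · rw [Finset.sum_eq_single (⟨(i:ℕ)+m, h⟩ : Fin d)]
    · simp
    · intro b _ hb
      rw [if_neg (fun hb' => hb (Fin.ext hb')), zero_mul]
    · simp
  · refine Finset.sum_eq_zero fun b _ => ?_
    have := b.isLt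
    rw [if_neg (by omega), zero_mul]

lemma jordan_pow_mulVec (d : ℕ) (lam : ℝ) (n : ℕ) (v : Fin d → ℝ) (i : Fin d) :
    (((jordanBlock d lam)^n) *ᵥ v) i
      = ∑ m ∈ range (n+1), (n.choose m : ℝ) * lam^(n-m) *
          (if h : (i:ℕ)+m < d then v ⟨(i:ℕ)+m, h⟩ else 0) := by
  rw [jordan_pow]
  have : (∑ m ∈ range (n+1), ((n.choose m : ℝ) * lam^(n-m)) • (jordanBlock d 0)^m) *ᵥ v
      = ∑ m ∈ range (n+1), ((n.choose m : ℝ) * lam^(n-m)) • (((jordanBlock d 0)^m) *ᵥ v) := by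
    induction (range (n+1)) using Finset.induction with
    | empty => simp
    | @insert a s ha ih =>
      rw [Finset.sum_insert ha, Finset.sum_insert ha, Matrix.add_mulVec,
        Matrix.smul_mulVec, ih]
  rw [this, Finset.sum_apply]
  refine Finset.sum_congr rfl fun m _ => ?_
  rw [Pi.smul_apply, nilp_mulVec, smul_eq_mul, mul_assoc]

lemma choose_div_pow_tendsto (m : ℕ) :
    Tendsto (fun n : ℕ => (n.choose m : ℝ) / (n:ℝ)^m) atTop (nhds ((m.factorial : ℝ)⁻¹)) := by
  have key : Tendsto (fun n : ℕ => (∏ i ∈ range m, (1 - (i:ℝ)/(n:ℝ))) * (m.factorial : ℝ)⁻¹)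
      atTop (nhds (1 * (m.factorial : ℝ)⁻¹)) := by
    refine Tendsto.mul_const _ ?_
    have : Tendsto (fun n : ℕ => (∏ i ∈ range m, (1 - (i:ℝ)/(n:ℝ)))) atTop
        (nhds (∏ _i ∈ range m, (1:ℝ))) := by
      refine tendsto_finset_prod _ fun i _ => ?_
      have := tendsto_const_div_atTop_nhds_zero_nat (i:ℝ)
      simpa using (tendsto_const_nhds (x := (1:ℝ))).sub this
    simpa using this
  rw [one_mul] at key
  refine key.congr' ?_
  filter_upwards [eventually_ge_atTop m, eventually_ge_atTop 1] with n hnm hn1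
  have hn0 : (n:ℝ) ≠ 0 := by positivity
  have hdesc : (n.descFactorial m : ℝ) = ∏ i ∈ range m, ((n:ℝ) - i) := by
    rw [Nat.descFactorial_eq_prod_range]
    push_cast [Nat.cast_prod]
    refine Finset.prod_congr rfl fun i hi => ?_
    rw [Nat.cast_sub (le_trans (Finset.mem_range.1 hi).le hnm)]
  have hfact : (m.factorial : ℝ) ≠ 0 := Nat.cast_ne_zero.2 m.factorial_ne_zero
  have hchoose : (n.choose m : ℝ) = (∏ i ∈ range m, ((n:ℝ) - i)) * (m.factorial : ℝ)⁻¹ := by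
    have h : (n.choose m : ℝ) * (m.factorial : ℝ) = (n.descFactorial m : ℝ) := by
      rw [← Nat.cast_mul, Nat.descFactorial_eq_factorial_mul_choose, Nat.mul_comm]
    field_simp
    rw [h, hdesc]
  have hprod : (∏ i ∈ range m, ((n:ℝ) - i)) / (n:ℝ)^m = ∏ i ∈ range m, (1 - (i:ℝ)/n) := by
    rw [show ((n:ℝ))^m = ∏ _i ∈ range m, (n:ℝ) by simp, ← Finset.prod_div_distrib]
    exact prod_congr rfl fun i _ => by field_simp

  rw [hchoose, ← hprod]; ring

lemma choose_div_pow_tendsto' (m j : ℕ) (h : m < j) :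
    Tendsto (fun n : ℕ => (n.choose m : ℝ) / (n:ℝ)^j) atTop (nhds 0) := by
  have h1 := choose_div_pow_tendsto m
  have h2 : Tendsto (fun n : ℕ => ((n:ℝ)^(j-m))⁻¹) atTop (nhds 0) := by
    refine Tendsto.inv_tendsto_atTop ?_
    exact (tendsto_pow_atTop (by omega : j - m ≠ 0)).comp tendsto_natCast_atTop_atTop
  have h3 := h1.mul h2
  rw [mul_zero] at h3
  refine h3.congr' ?_
  filter_upwards [eventually_ge_atTop 1] with n hn
  have hn0 : (n:ℝ) ≠ 0 := by positivity
  have hj : (n:ℝ)^j = (n:ℝ)^m * (n:ℝ)^(j-m) := by rw [← pow_add]; congr 1; omega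
  field_simp [hj]
  rw [hj]; ring

theorem stmt3 (d : ℕ) (hd : 0 < d) (lam : ℝ) (hlam : lam ≠ 0)
    (x : EuclideanSpace ℝ (Fin d)) (hx : x ≠ 0) :
    Filter.Tendsto (fun n : ℕ =>
      min ‖‖(Matrix.toEuclideanLin ((jordanBlock d lam) ^ n)) x‖⁻¹ •
            (Matrix.toEuclideanLin ((jordanBlock d lam) ^ n)) x -
            EuclideanSpace.single (⟨0, hd⟩ : Fin d) (1 : ℝ)‖
          ‖‖(Matrix.toEuclideanLin ((jordanBlock d lam) ^ n)) x‖⁻¹ •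
            (Matrix.toEuclideanLin ((jordanBlock d lam) ^ n)) x +
            EuclideanSpace.single (⟨0, hd⟩ : Fin d) (1 : ℝ)‖)
      Filter.atTop (nhds 0) := by
  classical
  set e1 : EuclideanSpace ℝ (Fin d) := EuclideanSpace.single (⟨0, hd⟩ : Fin d) (1 : ℝ) with he1
  set g : ℕ → ℝ := fun t => if h : t < d then x ⟨t, h⟩ else 0 with hgdef
  obtain ⟨i0, hi0⟩ : ∃ i : Fin d, x i ≠ 0 := by
    by_contra h
    push_neg at h
    exact hx (PiLp.ext fun i => by simpa using h i)
  have hSne : (Finset.filter (fun t => g t ≠ 0) (range d)).Nonempty :=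
    ⟨(i0:ℕ), Finset.mem_filter.2 ⟨Finset.mem_range.2 i0.isLt, by
      simpa [hgdef, dif_pos i0.isLt] using hi0⟩⟩
  set k : ℕ := (Finset.filter (fun t => g t ≠ 0) (range d)).max' hSne with hkdef
  have hkmem := Finset.max'_mem _ hSne
  have hkd : k < d := Finset.mem_range.1 (Finset.mem_filter.1 hkmem).1
  have hgk : g k ≠ 0 := (Finset.mem_filter.1 hkmem).2
  have hgt : ∀ t, k < t → g t = 0 := by
    intro t ht
    by_contra h
    rcases Nat.lt_or_ge t d with h' | h'
    · have hle := Finset.le_max' (Finset.filter (fun t => g t ≠ 0) (range d)) t (Finset.mem_filter.2 ⟨Finset.mem_range.2 h', h⟩)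
      rw [← hkdef] at hle
      omega
    · exact h (dif_neg (by omega))
  set J := jordanBlock d lam with hJ
  set Q : ℕ → ℕ → ℝ :=
    fun i n => ∑ m ∈ range (k - i + 1), (n.choose m : ℝ) * lam⁻¹^m * g (i+m) with hQdef
  have key : ∀ (n : ℕ), k ≤ n → ∀ i : Fin d,
      ((J ^ n) *ᵥ (fun t => x t)) i = if (i:ℕ) ≤ k then lam^n * Q (i:ℕ) n else 0 := by
    intro n hn i
    rw [hJ, jordan_pow_mulVec]
    have hterm : ∀ m, (if h : (i:ℕ)+m < d then x ⟨(i:ℕ)+m, h⟩ else 0) = g ((i:ℕ)+m) :=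
      fun m => rfl
    simp only [hterm]
    split_ifs with hik
    · rw [hQdef]
      simp only
      rw [Finset.mul_sum]
      rw [← Finset.sum_subset (Finset.range_subset_range.2 (by omega : k - (i:ℕ) + 1 ≤ n + 1))
        (fun m hm hm2 => by
          rw [hgt ((i:ℕ)+m) (by
            have := Finset.mem_range.1 hm
            have h2 : ¬ m < k - (i:ℕ) + 1 := fun hc => hm2 (Finset.mem_range.2 hc)
            omega), mul_zero])]
      refine Finset.sum_congr rfl fun m hm => ?_
      have hmk : m ≤ k - (i:ℕ) := Nat.lt_succ_iff.1 (Finset.mem_range.1 hm)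
      have hmn : m ≤ n := by omega
      rw [pow_sub₀ lam hlam hmn, ← inv_pow]
      ring
    · refine Finset.sum_eq_zero fun m hm => ?_
      rw [hgt ((i:ℕ)+m) (by omega), mul_zero]
  set L : ℕ → ℝ := fun i => (((k-i).factorial : ℝ))⁻¹ * lam⁻¹^(k-i) * g k with hLdef
  have hLne : ∀ i, L i ≠ 0 := fun i =>
    mul_ne_zero (mul_ne_zero (inv_ne_zero (Nat.cast_ne_zero.2 (Nat.factorial_ne_zero _)))
      (pow_ne_zero _ (inv_ne_zero hlam))) hgk
  have hQlim : ∀ i, i ≤ k → Tendsto (fun n : ℕ => Q i n / (n:ℝ)^(k-i)) atTop (nhds (L i)) := by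
    intro i hi
    have main : Tendsto (fun n : ℕ => ∑ m ∈ range (k-i+1),
        ((n.choose m : ℝ)/(n:ℝ)^(k-i)) * (lam⁻¹^m * g (i+m))) atTop
        (nhds (∑ m ∈ range (k-i+1),
          (if m = k-i then ((m.factorial : ℝ))⁻¹ else 0) * (lam⁻¹^m * g (i+m)))) := by
      refine tendsto_finset_sum _ fun m hm => ?_
      have hmk : m ≤ k - i := Nat.lt_succ_iff.1 (Finset.mem_range.1 hm)
      rcases eq_or_lt_of_le hmk with he | hlt
      · rw [if_pos he, ← he]
        exact (choose_div_pow_tendsto m).mul_const _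
      · rw [if_neg (by omega)]
        simpa using (choose_div_pow_tendsto' m (k-i) hlt).mul_const (lam⁻¹^m * g (i+m))
    have hval : (∑ m ∈ range (k-i+1),
        (if m = k-i then ((m.factorial : ℝ))⁻¹ else 0) * (lam⁻¹^m * g (i+m))) = L i := by
      rw [Finset.sum_eq_single (k-i)]
      · rw [if_pos rfl, hLdef]
        simp only
        rw [Nat.add_sub_cancel' hi]
        ring
      · intro m _ hne
        rw [if_neg hne, zero_mul]
      · intro h
        exact absurd (Finset.self_mem_range_succ _) h
    rw [← hval]
    refine main.congr fun n => ?_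
    rw [hQdef]
    simp only
    rw [Finset.sum_div]
    exact Finset.sum_congr rfl fun m _ => by ring
  have hQ0 := hQlim 0 (Nat.zero_le k)
  have hQ0ne : ∀ᶠ n : ℕ in atTop, Q 0 n ≠ 0 := by
    filter_upwards [hQ0.eventually_ne (hLne 0)] with n h1
    intro h
    exact h1 (by rw [h, zero_div])
  have hratio : ∀ i : ℕ, 1 ≤ i → i ≤ k → Tendsto (fun n : ℕ => Q i n / Q 0 n) atTop (nhds 0) := by
    intro i h1 h2
    have hmain : Tendsto (fun n : ℕ =>
        (Q i n / (n:ℝ)^(k-i)) * (Q 0 n / (n:ℝ)^(k-0))⁻¹ * ((n:ℝ)^i)⁻¹) atTop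
        (nhds (L i * (L 0)⁻¹ * 0)) := by
      refine Tendsto.mul (Tendsto.mul (hQlim i h2) ((hQlim 0 (Nat.zero_le _)).inv₀ (hLne 0))) ?_
      exact Tendsto.inv_tendsto_atTop
        ((tendsto_pow_atTop (by omega : i ≠ 0)).comp tendsto_natCast_atTop_atTop)
    rw [mul_zero] at hmain
    refine hmain.congr' ?_
    filter_upwards [hQ0ne, eventually_ge_atTop 1] with n hQn hn
    have hn0 : (n:ℝ) ≠ 0 := by positivity
    have hpow : (n:ℝ)^(k-0) = (n:ℝ)^(k-i) * (n:ℝ)^i := by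
      rw [← pow_add]
      congr 1
      omega
    have hpow2 : ((n:ℝ))^k = (n:ℝ)^(k-i) * (n:ℝ)^i := by rw [← pow_add]; congr 1; omega
    field_simp [hpow]
    rw [hpow]
    ring
  set w : ℕ → EuclideanSpace ℝ (Fin d) :=
    fun n => (lam^n * Q 0 n)⁻¹ • (Matrix.toEuclideanLin (J ^ n)) x with hwdef
  have hcoord : ∀ (n : ℕ) (i : Fin d),
      (Matrix.toEuclideanLin (J ^ n)) x i = ((J ^ n) *ᵥ (fun t => x t)) i := fun n i => rfl
  have hwcoord : ∀ᶠ n : ℕ in atTop, ∀ i : Fin d,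
      w n i = if (i:ℕ) ≤ k then Q (i:ℕ) n / Q 0 n else 0 := by
    filter_upwards [eventually_ge_atTop k, hQ0ne] with n hnk hQn
    intro i
    have hwa : w n i = (lam^n * Q 0 n)⁻¹ * ((J ^ n) *ᵥ (fun t => x t)) i := by
      rw [hwdef]
      simp only [PiLp.smul_apply, smul_eq_mul]
      rw [hcoord]
    rw [hwa, key n hnk i]
    split_ifs with hik
    · have hlamn : lam^n ≠ 0 := pow_ne_zero _ hlam
      field_simp
    · rw [mul_zero]
  have hwlim : Tendsto w atTop (nhds e1) := by
    have hpi : Tendsto (fun n => (WithLp.equiv 2 (Fin d → ℝ)) (w n)) atTop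
        (nhds ((WithLp.equiv 2 (Fin d → ℝ)) e1)) := by
      rw [tendsto_pi_nhds]
      intro i
      have he1i : (WithLp.equiv 2 (Fin d → ℝ)) e1 i = if i = (⟨0, hd⟩ : Fin d) then 1 else 0 := by
        rw [he1]
        exact EuclideanSpace.single_apply _ _ _
      rcases Nat.eq_zero_or_pos (i:ℕ) with hi0 | hipos
      · rw [he1i, if_pos (Fin.ext hi0)]
        refine (tendsto_const_nhds (x := (1:ℝ))).congr' ?_
        filter_upwards [hwcoord, hQ0ne] with n hc hQn
        have hv : (WithLp.equiv 2 (Fin d → ℝ)) (w n) i = Q (i:ℕ) n / Q 0 n := by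
          rw [show (WithLp.equiv 2 (Fin d → ℝ)) (w n) i = w n i from rfl, hc i,
            if_pos (by omega)]
        rw [hv, hi0, div_self hQn]
      · have hne : ¬ i = (⟨0, hd⟩ : Fin d) := fun h => by simp [h] at hipos
        rw [he1i, if_neg hne]
        rcases Nat.lt_or_ge k (i:ℕ) with hik | hik
        · refine (tendsto_const_nhds (x := (0:ℝ))).congr' ?_
          filter_upwards [hwcoord] with n hc
          rw [show (WithLp.equiv 2 (Fin d → ℝ)) (w n) i = w n i from rfl, hc i,
            if_neg (by omega)]
        · refine (hratio (i:ℕ) hipos hik).congr' ?_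
          filter_upwards [hwcoord] with n hc
          rw [show (WithLp.equiv 2 (Fin d → ℝ)) (w n) i = w n i from rfl, hc i, if_pos hik]
    have h2 := ((PiLp.continuous_toLp 2 (fun _ : Fin d => ℝ)).tendsto _).comp hpi
    exact h2
  have hnorm1 : Tendsto (fun n => ‖w n‖) atTop (nhds 1) := by
    have h := hwlim.norm
    rwa [he1, EuclideanSpace.norm_single, norm_one] at h
  have herr : Tendsto (fun n => ‖‖w n‖⁻¹ • w n - e1‖) atTop (nhds 0) := by
    have h1 : Tendsto (fun n => ‖w n‖⁻¹ • w n) atTop (nhds ((1:ℝ)⁻¹ • e1)) :=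
      ((hnorm1.inv₀ one_ne_zero).smul hwlim)
    rw [inv_one, one_smul] at h1
    have h2 := (h1.sub (tendsto_const_nhds (x := e1))).norm
    simpa using h2
  refine tendsto_of_tendsto_of_tendsto_of_le_of_le' tendsto_const_nhds herr
    (Eventually.of_forall fun n => le_min (norm_nonneg _) (norm_nonneg _)) ?_
  filter_upwards [hQ0ne, eventually_ge_atTop k] with n hQn hnk
  have hc : lam^n * Q 0 n ≠ 0 := mul_ne_zero (pow_ne_zero _ hlam) hQn
  have hy : (Matrix.toEuclideanLin (J ^ n)) x = (lam^n * Q 0 n) • w n := by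
    simp only [hwdef]
    exact (smul_inv_smul₀ hc _).symm
  have hyn : ‖(Matrix.toEuclideanLin (J ^ n)) x‖ = |lam^n * Q 0 n| * ‖w n‖ := by
    rw [hy, norm_smul, Real.norm_eq_abs]
  have hsc : ∀ W : ℝ, ((lam^n * Q 0 n) * W)⁻¹ * (lam^n * Q 0 n) = W⁻¹ := fun W => by
    rw [mul_inv, mul_comm ((lam^n * Q 0 n)⁻¹) (W⁻¹), mul_assoc, inv_mul_cancel₀ hc, mul_one]
  rcases hc.lt_or_gt with hneg | hpos
  · have hs : ‖(Matrix.toEuclideanLin (J ^ n)) x‖⁻¹ • (Matrix.toEuclideanLin (J ^ n)) x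
        = -(‖w n‖⁻¹ • w n) := by
      rw [hyn, hy, smul_smul, abs_of_neg hneg, ← neg_smul]
      congr 1
      rw [neg_mul, inv_neg, neg_mul, hsc]
    refine le_trans (min_le_right _ _) (le_of_eq ?_)
    rw [hs, show -(‖w n‖⁻¹ • w n) + e1 = -(‖w n‖⁻¹ • w n - e1) by abel, norm_neg]
  · have hs : ‖(Matrix.toEuclideanLin (J ^ n)) x‖⁻¹ • (Matrix.toEuclideanLin (J ^ n)) x
        = ‖w n‖⁻¹ • w n := by
      rw [hyn, hy, smul_smul, abs_of_pos hpos, hsc]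
    refine le_trans (min_le_left _ _) (le_of_eq ?_)
    rw [hs]
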